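/- Let A_Γ be a T-algebra with the ScP. Then every x ∈ X(Γ,ℵ₀) has countable character in X(Γ): there is a countable family of open sets in the Stone topology on X(Γ) forming a neighborhood base at x. -/

import Mathlib

open Set

noncomputable section

/-- The least uncountable ordinal `ω₁`. -/
def omega1 : Ordinal := (Cardinal.aleph 1).ord

/-- `⋃_{γ ∈ F} a_γ` for a finite set `F` of indices. -/
def unionFin (a : Ordinal → Set ℕ) (F : Finset Ordinal) : Set ℕ :=
  ⋃ γ ∈ F, a γ

/-- A sequence of subsets of `ℕ`, with indices from a (downward closed) domain `D`
of ordinals, is coherent if for all `α ≤ β` in the domain there is a finite `F ⊆ α`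
with `a α ∩ a β ⊆ ⋃_{γ∈F} a γ` or `a α ⊆ a β ∪ ⋃_{γ∈F} a γ`. -/
def CoherentOn (D : Set Ordinal) (a : Ordinal → Set ℕ) : Prop :=
  ∀ α β : Ordinal, α ≤ β → β ∈ D →
    ∃ F : Finset Ordinal, (∀ γ ∈ F, γ < α) ∧
      (a α ∩ a β ⊆ unionFin a F ∨ a α ⊆ a β ∪ unionFin a F)

/-- Properness: no `a β` is contained in a finite union of earlier terms. -/
def ProperOn (D : Set Ordinal) (a : Ordinal → Set ℕ) : Prop :=
  ∀ β ∈ D, ∀ F : Finset Ordinal, (∀ γ ∈ F, γ < β) → ¬ a β ⊆ unionFin a F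

/-- `â_β = { α ≤ β : a α ∖ a β ⊆ ⋃_{γ∈F} a γ for some finite F ⊆ α }`. -/
def hatA (a : Ordinal → Set ℕ) (β : Ordinal) : Set Ordinal :=
  { α | α ≤ β ∧ ∃ F : Finset Ordinal, (∀ γ ∈ F, γ < α) ∧ a α \ a β ⊆ unionFin a F }

/-- The topology `τ(A)` on `λ + 1 = {α : α ≤ λ}` generated by the subbase
consisting of the sets `â_β` and their complements, `β < λ`. -/
def tau (lam : Ordinal) (a : Ordinal → Set ℕ) :
    TopologicalSpace {α : Ordinal // α ≤ lam} :=
  TopologicalSpace.generateFrom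
    { s | ∃ β < lam, s = {x : {α : Ordinal // α ≤ lam} | x.1 ∈ hatA a β} ∨
                     s = {x : {α : Ordinal // α ≤ lam} | x.1 ∈ hatA a β}ᶜ }

/-- The subspace `ω₁ = {α : α < ω₁}` of `(ω₁+1, τ(A))`. -/
def tauSub (a : Ordinal → Set ℕ) : TopologicalSpace {y : Ordinal // y < omega1} :=
  TopologicalSpace.induced
    (fun y : {y : Ordinal // y < omega1} => (⟨y.1, y.2.le⟩ : {α : Ordinal // α ≤ omega1}))
    (tau omega1 a)

/-- Closed unbounded subsets of `ω₁`. -/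
def IsClubOmega1 (C : Set Ordinal) : Prop :=
  C ⊆ Iio omega1 ∧
  (∀ α < omega1, ∃ β ∈ C, α ≤ β) ∧
  (∀ δ, δ < omega1 → δ ≠ 0 → (∀ α < δ, ∃ β ∈ C, α < β ∧ β < δ) → δ ∈ C)

/-- Stationary subsets of `ω₁`: sets meeting every club. -/
def IsStationaryOmega1 (S : Set Ordinal) : Prop :=
  ∀ C : Set Ordinal, IsClubOmega1 C → (S ∩ C).Nonempty

/-- The stationary covering property for a coherent sequence whose index domain is `D`:
if the sequence has length `ω₁` (i.e. `Iio ω₁ ⊆ D`), then every stationary `S ⊆ ω₁`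
together with some finite `F` covers, i.e. `⋃_{γ ∈ S ∪ F} â_γ = ω₁`.  (Sequences of
length `< ω₁` have the ScP by convention.) -/
def HasScP (D : Set Ordinal) (a : Ordinal → Set ℕ) : Prop :=
  Iio omega1 ⊆ D →
    ∀ S : Set Ordinal, S ⊆ Iio omega1 → IsStationaryOmega1 S →
      ∃ F : Finset Ordinal, (⋃ γ ∈ S ∪ (↑F : Set Ordinal), hatA a γ) = Iio omega1

/-- A node of the tree `2^{≤ω₁}`: a function `val` defined on the ordinals `< len`
(with the canonical value `false` beyond `len`). -/
structure Node where
  len : Ordinal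
  val : Ordinal → Bool
  canon : ∀ α, len ≤ α → val α = false

open Classical in
/-- The restriction `x ↾ β`. -/
def Node.restrict (x : Node) (β : Ordinal) : Node where
  len := β
  val := fun α => if α < β then x.val α else false
  canon := fun α h => if_neg (not_lt.2 h)

/-- `τ.Extends σ` means `σ ⊆ τ`, i.e. `τ` extends `σ`. -/
def Node.Extends (τ σ : Node) : Prop :=
  σ.len ≤ τ.len ∧ ∀ α < σ.len, τ.val α = σ.val α

/-- Successor ordinals. -/
def IsSucc (o : Ordinal) : Prop := ∃ β, o = β + 1

open Classical in
/-- `σ†`: if `σ` has successor length `β+1`, the node agreeing with `σ` except at `β`;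
otherwise `σ` itself. -/
def Node.dagger (σ : Node) : Node :=
  if h : IsSucc σ.len then
    { len := σ.len
      val := fun α => if α = Classical.choose h then !(σ.val α) else σ.val α
      canon := by
        intro α hα
        have hs := Classical.choose_spec h
        have hne : α ≠ Classical.choose h := by
          intro he
          rw [hs, he] at hα
          rw [Ordinal.add_one_eq_succ] at hα
          exact absurd hα (not_le.2 (Order.lt_succ (Classical.choose h)))
        show (if α = Classical.choose h then !(σ.val α) else σ.val α) = false
        rw [if_neg hne]
        exact σ.canon α hα }
  else σ

open Classical in
/-- `σ ⌢ b` : the node `σ` extended by one value `b`. -/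
def Node.snoc (σ : Node) (b : Bool) : Node where
  len := σ.len + 1
  val := fun α => if α = σ.len then b else σ.val α
  canon := by
    intro α hα
    have h1 : σ.len < α := by
      have h2 : σ.len < σ.len + 1 := by
        rw [Ordinal.add_one_eq_succ]; exact Order.lt_succ σ.len
      exact lt_of_lt_of_le h2 hα
    show (if α = σ.len then b else σ.val α) = false
    rw [if_neg h1.ne']
    exact σ.canon α h1.le

open Classical in
/-- `x ⌢ σ` : concatenation of nodes. -/
def Node.append (x σ : Node) : Node where
  len := x.len + σ.len
  val := fun α => if α < x.len then x.val α else σ.val (α - x.len)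
  canon := by
    intro α hα
    have h1 : ¬ α < x.len := not_lt.2 (le_trans (le_add_of_nonneg_right (by simp)) hα)
    show (if α < x.len then x.val α else σ.val (α - x.len)) = false
    rw [if_neg h1]
    apply σ.canon
    by_contra h2
    rw [not_le] at h2
    have h3 : α ≤ x.len + (α - x.len) := Ordinal.le_add_sub α x.len
    have h4 : x.len + (α - x.len) < x.len + σ.len := (add_lt_add_iff_left x.len).2 h2
    exact absurd hα (not_le.2 (lt_of_le_of_lt h3 h4))

/-- A subtree of `2^{<ω₁}` that is downward closed, twinned and has no maximal elements. -/
structure GoodTree (Γ : Set Node) : Prop where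
  lt_omega1 : ∀ σ ∈ Γ, σ.len < omega1
  downward : ∀ σ ∈ Γ, ∀ β ≤ σ.len, σ.restrict β ∈ Γ
  twinned : ∀ σ ∈ Γ, σ.dagger ∈ Γ
  noMax : ∀ σ ∈ Γ, ∃ τ ∈ Γ, σ.len < τ.len ∧ τ.Extends σ

/-- `X(Γ)`: the maximal branches of `Γ`, i.e. the minimal elements of `2^{≤ω₁} ∖ Γ`. -/
def XGamma (Γ : Set Node) : Set Node :=
  { x | x.len ≤ omega1 ∧ x ∉ Γ ∧ ∀ β < x.len, x.restrict β ∈ Γ }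

/-- The index domain of the branch sequence `A_{Γ,x}`. -/
def branchDomain (Γ : Set Node) (x : Node) : Set Ordinal :=
  { α | α + 1 ≤ x.len ∧ x.restrict (α + 1) ∈ Γ }

/-- The branch sequence `A_{Γ,x}`, `a^x_α = a_{x ↾ (α+1)}`. -/
def branchSeq (a : Node → Set ℕ) (x : Node) : Ordinal → Set ℕ :=
  fun α => a (x.restrict (α + 1))

/-- A `𝕋`-algebra on the tree `Γ`. -/
structure IsTAlgebra (Γ : Set Node) (a : Node → Set ℕ) : Prop where
  tree : GoodTree Γ
  empty_of_not_succ : ∀ σ ∈ Γ, ¬ IsSucc σ.len → a σ = ∅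
  compl_dagger : ∀ σ ∈ Γ, IsSucc σ.len → a σ.dagger = (a σ)ᶜ
  branch_coherent : ∀ x : Node, x.len ≤ omega1 →
    CoherentOn (branchDomain Γ x) (branchSeq a x)
  branch_proper : ∀ x : Node, x.len ≤ omega1 →
    ProperOn (branchDomain Γ x) (branchSeq a x)

/-- The Boolean subalgebra of `P(ℕ)` generated by a family `G`. -/
inductive GenBool (G : Set (Set ℕ)) : Set ℕ → Prop
  | basic (s : Set ℕ) : s ∈ G → GenBool G s
  | empty : GenBool G ∅
  | compl (s : Set ℕ) : GenBool G s → GenBool G sᶜ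
  | inter (s t : Set ℕ) : GenBool G s → GenBool G t → GenBool G (s ∩ t)

/-- `B_Γ`: the Boolean subalgebra of `P(ℕ)` generated by `{a_σ : σ ∈ Γ}`. -/
def BGamma (Γ : Set Node) (a : Node → Set ℕ) : Set (Set ℕ) :=
  { b | GenBool { s | ∃ σ ∈ Γ, s = a σ } b }

/-- A finite intersection from the family `{ℕ ∖ a_{x↾(α+1)} : α + 1 ≤ λ_x}`. -/
def finInterCompl (a : Node → Set ℕ) (x : Node) (F : Finset Ordinal) : Set ℕ :=
  ⋂ α ∈ F, (a (x.restrict (α + 1)))ᶜ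

/-- The ultrafilter `U_x` on `B_Γ` generated by the finite intersections of
`{ℕ ∖ a_{x↾(α+1)} : α + 1 ≤ λ_x}`. -/
def Ux (Γ : Set Node) (a : Node → Set ℕ) (x : Node) : Set (Set ℕ) :=
  { b | b ∈ BGamma Γ a ∧
    ∃ F : Finset Ordinal, (∀ α ∈ F, α + 1 ≤ x.len) ∧ finInterCompl a x F ⊆ b }

/-- The Stone topology on `X(Γ)`, with subbasic open sets `{z : b ∈ U_z}`, `b ∈ B_Γ`. -/
def stoneTop (Γ : Set Node) (a : Node → Set ℕ) :
    TopologicalSpace {z : Node // z ∈ XGamma Γ} :=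
  TopologicalSpace.generateFrom
    { s | ∃ b ∈ BGamma Γ a, s = { z : {z : Node // z ∈ XGamma Γ} | b ∈ Ux Γ a z.1 } }

/-- An ultrafilter on a Boolean subalgebra `B` of `P(ℕ)`. -/
def IsUltrafilterOn (B U : Set (Set ℕ)) : Prop :=
  U ⊆ B ∧
  (∀ s ∈ U, ∀ t ∈ U, s ∩ t ∈ U) ∧
  (∀ s ∈ U, ∀ t ∈ B, s ⊆ t → t ∈ U) ∧
  ∅ ∉ U ∧
  (∀ b ∈ B, Xor' (b ∈ U) (bᶜ ∈ U))

/-- The length-lexicographic (strict) order on finite binary strings. -/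
def LenLexLT (σ τ : Node) : Prop :=
  σ.len < τ.len ∨ (σ.len = τ.len ∧ ∃ i < σ.len, σ.val i = false ∧ τ.val i = true ∧
    ∀ j < i, σ.val j = τ.val j)

/-- `e` is the standard length-lexicographic enumeration of `2^{<ω}`. -/
def IsStdEnum (e : ℕ → Node) : Prop :=
  (∀ k, (e k).len < Ordinal.omega0) ∧
  (∀ σ : Node, σ.len < Ordinal.omega0 → ∃ k, e k = σ) ∧
  (∀ k l : ℕ, k < l → LenLexLT (e k) (e l))

/-- `⋃_{k<n} c^x_k` where `c^x_n = a^x_{e(n)} ∖ ⋃_{k<n} c^x_k` (recursively). -/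
def cUnion (a : Node → Set ℕ) (x : Node) (eb : ℕ → Ordinal) : ℕ → Set ℕ
  | 0 => ∅
  | n + 1 => cUnion a x eb n ∪ (a (x.restrict (eb n + 1)) \ cUnion a x eb n)

/-- `c^x_n = a^x_{e(n)} ∖ ⋃_{k<n} c^x_k`. -/
def cSeq (a : Node → Set ℕ) (x : Node) (eb : ℕ → Ordinal) (n : ℕ) : Set ℕ :=
  a (x.restrict (eb n + 1)) \ cUnion a x eb n

/-- `{x ⌢ σ : σ ∈ 2^{<ω}}`. -/
def appendSet (x : Node) : Set Node :=
  { τ | ∃ σ : Node, σ.len < Ordinal.omega0 ∧ τ = x.append σ }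

/-- The defining equations of the extension `A_Γ[π,x]`:
`a_x = ∅`, `a_{x⌢(σ⌢0)} = ⋃{c^x_k : σ⌢1 ⊆ σ_{π(k)}}`, `a_{x⌢(σ⌢1)} = ℕ ∖ a_{x⌢(σ⌢0)}`. -/
def ExtEquations (e : ℕ → Node) (π : ℕ → ℕ) (a : Node → Set ℕ) (x : Node)
    (eb : ℕ → Ordinal) (a' : Node → Set ℕ) : Prop :=
  a' x = ∅ ∧
  ∀ σ : Node, σ.len < Ordinal.omega0 →
    (a' (x.append (σ.snoc false)) =
      ⋃ k ∈ { k : ℕ | (e (π k)).Extends (σ.snoc true) }, cSeq a x eb k) ∧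
    (a' (x.append (σ.snoc true)) = (a' (x.append (σ.snoc false)))ᶜ)

/-- The full tree `2^{<ω₁}`. -/
def GammaFull : Set Node := { σ | σ.len < omega1 }

theorem natLtOmega1 (n : ℕ) : (n : Ordinal) < omega1 := by
  have h1 : (n : Ordinal) < Ordinal.omega0 := Ordinal.nat_lt_omega0 n
  have h2 : Ordinal.omega0 < omega1 := by
    rw [omega1, ← Cardinal.ord_aleph0]
    exact Cardinal.ord_lt_ord.2 (by rw [← Cardinal.aleph_zero]
                                    exact Cardinal.aleph_lt_aleph.2 zero_lt_one)
  exact h1.trans h2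



lemma Node.ext' {σ τ : Node} (hlen : σ.len = τ.len) (hval : ∀ α, σ.val α = τ.val α) :
    σ = τ := by
  cases σ; cases τ
  simp only [Node.mk.injEq]
  exact ⟨hlen, funext hval⟩

lemma ord_lt_add_one_iff {α β : Ordinal} : α < β + 1 ↔ α ≤ β := by
  rw [Ordinal.add_one_eq_succ, Order.lt_succ_iff]

lemma ord_self_lt_add_one (β : Ordinal) : β < β + 1 := ord_lt_add_one_iff.2 le_rfl

lemma no_succ_len {Γ : Set Node} (hT : GoodTree Γ) {x : Node} (hx : x ∈ XGamma Γ)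
    {β : Ordinal} (h : x.len = β + 1) : False := by
  have hβlt : β < x.len := by rw [h]; exact ord_self_lt_add_one β
  have hyΓ : x.restrict β ∈ Γ := hx.2.2 β hβlt
  obtain ⟨τ, hτΓ, hτlen, hτext⟩ := hT.noMax _ hyΓ
  have hβ1le : β + 1 ≤ τ.len := by
    rw [Ordinal.add_one_eq_succ]; exact Order.succ_le_of_lt hτlen
  set σ := τ.restrict (β + 1) with hσdef
  have hσΓ : σ ∈ Γ := hT.downward τ hτΓ _ hβ1le
  have hσlen : σ.len = β + 1 := rfl
  have hσval : ∀ α, σ.val α = if α < β + 1 then τ.val α else false := fun _ => rfl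
  have hagree : ∀ α, α < β → x.val α = σ.val α := by
    intro α hα
    have h1 : τ.val α = (x.restrict β).val α := hτext.2 α hα
    have h2 : (x.restrict β).val α = x.val α := by
      show (if α < β then x.val α else false) = x.val α
      rw [if_pos hα]
    rw [hσval, if_pos (hα.trans (ord_self_lt_add_one β)), h1, h2]
  have hxhigh : ∀ α, ¬ α < β + 1 → x.val α = false := fun α hα =>
    x.canon α (h ▸ not_lt.1 hα)
  have hσβ : σ.val β = τ.val β := by
    rw [hσval, if_pos (ord_self_lt_add_one β)]
  have hIs : IsSucc σ.len := ⟨β, rfl⟩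
  have hc : Classical.choose hIs = β := by
    have hs : β + 1 = Classical.choose hIs + 1 := Classical.choose_spec hIs
    rw [Ordinal.add_one_eq_succ, Ordinal.add_one_eq_succ] at hs
    exact (Order.succ_injective hs).symm
  have hdlen : σ.dagger.len = β + 1 := by
    unfold Node.dagger; rw [dif_pos hIs]; exact hσlen
  have hdval : ∀ α, σ.dagger.val α = if α = β then !(σ.val α) else σ.val α := by
    intro α; unfold Node.dagger; rw [dif_pos hIs]
    show (if α = Classical.choose hIs then !(σ.val α) else σ.val α) = _
    rw [hc]
  by_cases hvb : x.val β = τ.val β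
  · have hxσ : x = σ := by
      refine Node.ext' h fun α => ?_
      rcases lt_trichotomy α β with h1 | h1 | h1
      · exact hagree α h1
      · rw [h1, hσβ, hvb]
      · have h2 : ¬ α < β + 1 := not_lt.2 (by
          rw [Ordinal.add_one_eq_succ]; exact Order.succ_le_of_lt h1)
        rw [hxhigh α h2, hσval, if_neg h2]
    exact hx.2.1 (hxσ ▸ hσΓ)
  · have hvb' : x.val β = !(τ.val β) := by
      cases hb : x.val β <;> cases ht : τ.val β <;> simp_all
    have hxσ : x = σ.dagger := by
      refine Node.ext' (h.trans hdlen.symm) fun α => ?_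
      rw [hdval]
      rcases lt_trichotomy α β with h1 | h1 | h1
      · rw [if_neg h1.ne, hagree α h1]
      · rw [h1, if_pos rfl, hσβ, hvb']
      · have h2 : ¬ α < β + 1 := not_lt.2 (by
          rw [Ordinal.add_one_eq_succ]; exact Order.succ_le_of_lt h1)
        rw [if_neg h1.ne', hxhigh α h2, hσval, if_neg h2]
    exact hx.2.1 (hxσ ▸ hT.twinned σ hσΓ)

lemma restrict_succ_mem {Γ : Set Node} (hT : GoodTree Γ) {x : Node} (hx : x ∈ XGamma Γ)
    {α : Ordinal} (h : α + 1 ≤ x.len) : x.restrict (α + 1) ∈ Γ := by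
  rcases lt_or_eq_of_le h with h' | h'
  · exact hx.2.2 _ h'
  · exact (no_succ_len hT hx h'.symm).elim

lemma finInter_mem_BGamma {Γ : Set Node} {a : Node → Set ℕ} {x : Node} {F : Finset Ordinal}
    (h : ∀ α ∈ F, x.restrict (α + 1) ∈ Γ) : finInterCompl a x F ∈ BGamma Γ a := by
  classical
  induction F using Finset.induction_on with
  | empty =>
      have he : finInterCompl a x ∅ = (∅ : Set ℕ)ᶜ := by
        simp [finInterCompl]
      rw [he]; exact GenBool.compl _ GenBool.empty
  | @insert γ F hγF ih =>
      have he : finInterCompl a x (insert γ F) =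
          (a (x.restrict (γ + 1)))ᶜ ∩ finInterCompl a x F := by
        simp [finInterCompl, Set.biInter_insert]
      rw [he]
      exact GenBool.inter _ _
        (GenBool.compl _ (GenBool.basic _ ⟨_, h γ (Finset.mem_insert_self γ F), rfl⟩))
        (ih fun α hα => h α (Finset.mem_insert_of_mem hα))

lemma finInter_antitone {a : Node → Set ℕ} {x : Node} {F G : Finset Ordinal} (h : F ⊆ G) :
    finInterCompl a x G ⊆ finInterCompl a x F := by
  intro n hn
  simp only [finInterCompl, Set.mem_iInter] at hn ⊢
  exact fun α hα => hn α (h hα)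

lemma countable_Iio {lam : Ordinal} (h : lam < omega1) : (Set.Iio lam).Countable := by
  have h1 : lam.card < Cardinal.aleph 1 := Cardinal.lt_ord.1 h
  have h2 : Countable lam.ToType := by
    rw [← Cardinal.mk_le_aleph0_iff, Cardinal.mk_toType]
    rwa [← Cardinal.succ_aleph0, Order.lt_succ_iff] at h1
  rw [← Set.countable_coe_iff]
  exact Countable.of_equiv _ (Ordinal.ToType.mk (o := lam)).symm.toEquiv

lemma countable_finsets {lam : Ordinal} (h : lam < omega1) :
    {F : Finset Ordinal | ∀ α ∈ F, α + 1 ≤ lam}.Countable := by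
  have h2 := Set.countable_setOf_finite_subset (countable_Iio h)
  have h3 := h2.preimage (f := fun F : Finset Ordinal => (F : Set Ordinal))
    Finset.coe_injective
  refine Set.Countable.mono ?_ h3
  intro F hF
  exact ⟨F.finite_toSet, fun α hα =>
    lt_of_lt_of_le (ord_self_lt_add_one α) (hF α hα)⟩

/-- If a `𝕋`-algebra has the ScP, then every `x ∈ X(Γ,ℵ₀)` has countable character
in the Stone topology on `X(Γ)`: there is a countable neighborhood base at `x`
consisting of open sets. -/
theorem stmt8 (Γ : Set Node) (a : Node → Set ℕ) (hT : IsTAlgebra Γ a)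
    (hScP : ∀ x : Node, x.len = omega1 → HasScP (branchDomain Γ x) (branchSeq a x))
    (x : {z : Node // z ∈ XGamma Γ}) (hx : x.1.len < omega1) :
    ∃ 𝓑 : Set (Set {z : Node // z ∈ XGamma Γ}), 𝓑.Countable ∧
      (∀ U ∈ 𝓑, @IsOpen _ (stoneTop Γ a) U ∧ x ∈ U) ∧
      (∀ V : Set {z : Node // z ∈ XGamma Γ},
        @IsOpen _ (stoneTop Γ a) V → x ∈ V → ∃ U ∈ 𝓑, U ⊆ V) := by
  classical
  have hres : ∀ α : Ordinal, α + 1 ≤ x.1.len → x.1.restrict (α + 1) ∈ Γ :=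
    fun α h => restrict_succ_mem hT.tree x.2 h
  have hBG : ∀ F : Finset Ordinal, (∀ α ∈ F, α + 1 ≤ x.1.len) →
      finInterCompl a x.1 F ∈ BGamma Γ a :=
    fun F hF => finInter_mem_BGamma (fun α hα => hres α (hF α hα))
  set T : Finset Ordinal → Set {z : Node // z ∈ XGamma Γ} :=
    fun F => {z | finInterCompl a x.1 F ∈ Ux Γ a z.1} with hTdef
  have hmemT : ∀ F : Finset Ordinal, (∀ α ∈ F, α + 1 ≤ x.1.len) → x ∈ T F :=
    fun F hF => ⟨hBG F hF, F, hF, subset_rfl⟩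
  have hopenT : ∀ F : Finset Ordinal, (∀ α ∈ F, α + 1 ≤ x.1.len) →
      @IsOpen _ (stoneTop Γ a) (T F) := by
    intro F hF
    exact TopologicalSpace.GenerateOpen.basic _ ⟨finInterCompl a x.1 F, hBG F hF, rfl⟩
  have hmono : ∀ F G : Finset Ordinal, F ⊆ G → (∀ α ∈ F, α + 1 ≤ x.1.len) →
      T G ⊆ T F := by
    intro F G hFG hF z hz
    obtain ⟨-, H, hH, hHsub⟩ := hz
    exact ⟨hBG F hF, H, hH, hHsub.trans (finInter_antitone hFG)⟩
  refine ⟨T '' {F | ∀ α ∈ F, α + 1 ≤ x.1.len}, (countable_finsets hx).image T, ?_, ?_⟩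
  · rintro U ⟨F, hF, rfl⟩
    exact ⟨hopenT F hF, hmemT F hF⟩
  · intro V hV hxV
    suffices hkey : ∃ F : Finset Ordinal, (∀ α ∈ F, α + 1 ≤ x.1.len) ∧ T F ⊆ V by
      obtain ⟨F, hF, hsub⟩ := hkey
      exact ⟨T F, ⟨F, hF, rfl⟩, hsub⟩
    have hgen : TopologicalSpace.GenerateOpen
        { s | ∃ b ∈ BGamma Γ a, s = { z : {z : Node // z ∈ XGamma Γ} | b ∈ Ux Γ a z.1 } }
        V := hV
    clear hV
    revert hxV
    induction hgen with
    | basic s hs =>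
        intro hxV
        obtain ⟨b, hb, rfl⟩ := hs
        obtain ⟨-, F, hF, hFsub⟩ := hxV
        refine ⟨F, hF, fun z hz => ?_⟩
        obtain ⟨-, G, hG, hGsub⟩ := hz
        exact ⟨hb, G, hG, hGsub.trans hFsub⟩
    | univ => exact fun _ => ⟨∅, by simp, Set.subset_univ _⟩
    | inter s t hs ht ihs iht =>
        intro hxV
        obtain ⟨F₁, hF₁, hs₁⟩ := ihs hxV.1
        obtain ⟨F₂, hF₂, hs₂⟩ := iht hxV.2
        refine ⟨F₁ ∪ F₂, ?_, ?_⟩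
        · intro α hα
          rcases Finset.mem_union.1 hα with h | h
          · exact hF₁ α h
          · exact hF₂ α h
        · intro z hz
          exact ⟨hs₁ (hmono F₁ _ Finset.subset_union_left hF₁ hz),
                 hs₂ (hmono F₂ _ Finset.subset_union_right hF₂ hz)⟩
    | sUnion S hS ih =>
        intro hxV
        obtain ⟨s, hsS, hxs⟩ := hxV
        obtain ⟨F, hF, hsub⟩ := ih s hsS hxs
        exact ⟨F, hF, hsub.trans (Set.subset_sUnion_of_mem hsS)⟩

end
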